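/- Let φ : ℝ → ℝ be Lipschitz with constant K > 0 and 1-periodic, let J = (−1/K, 1/K), and let (t₀,a₀), (t,a) ∈ ℝ × J. If either (a > a₀ and (t − t₀)/(a − a₀) < −sup φ) or (a < a₀ and (t − t₀)/(a − a₀) > −inf φ), then Trans(F_{t,a}) ≤ Trans(F_{t₀,a₀}). If either (a > a₀ and (t − t₀)/(a − a₀) > −inf φ) or (a < a₀ and (t − t₀)/(a − a₀) < −sup φ), then Trans(F_{t,a}) ≥ Trans(F_{t₀,a₀}). In each case the inequality is strict if Trans(F_{t₀,a₀}) is irrational. -/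

import Mathlib

open Filter Topology Set

/-- `τ` is the translation number of `F`: for every `x`, `(F^[n] x - x)/n → τ`. -/
def IsTransNum (F : ℝ → ℝ) (τ : ℝ) : Prop :=
  ∀ x : ℝ, Filter.Tendsto (fun n : ℕ => (F^[n] x - x) / n) Filter.atTop (nhds τ)

lemma aux_exists_small (α : ℝ) (hα : Irrational α) {ε : ℝ} (hε : 0 < ε) :
    ∃ m n : ℤ, n ≠ 0 ∧ (m : ℝ) + n * α ∈ Set.Ioo (0 : ℝ) (min ε 1) := by
  set S : AddSubgroup ℝ := AddSubgroup.closure {1, α} with hSdef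
  have hdense : Dense (S : Set ℝ) := by
    rcases S.dense_or_cyclic with h | ⟨c, hc⟩
    · exact h
    · exfalso
      have h1 : (1 : ℝ) ∈ S := AddSubgroup.subset_closure (by simp)
      have h2 : α ∈ S := AddSubgroup.subset_closure (by simp)
      rw [hc, AddSubgroup.mem_closure_singleton] at h1 h2
      obtain ⟨m, hm⟩ := h1
      obtain ⟨n, hn⟩ := h2
      rw [zsmul_eq_mul] at hm hn
      have hm0 : (m : ℝ) ≠ 0 := by
        intro h; rw [h, zero_mul] at hm; exact one_ne_zero hm.symm
      have hm0' : (m : ℚ) ≠ 0 := by exact_mod_cast fun h => hm0 (by exact_mod_cast h)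
      refine hα ⟨(n : ℚ) / m, ?_⟩
      have hcval : c = 1 / m := by field_simp at hm ⊢; linarith [hm]
      rw [← hn, hcval]
      push_cast
      field_simp
  have hne : (Set.Ioo (0 : ℝ) (min ε 1)).Nonempty :=
    Set.nonempty_Ioo.2 (lt_min hε one_pos)
  obtain ⟨g, hgS, hg⟩ := hdense.exists_mem_open isOpen_Ioo hne
  obtain ⟨m, n, hmn⟩ := AddSubgroup.mem_closure_pair.1 hgS
  rw [zsmul_eq_mul, zsmul_eq_mul, mul_one] at hmn
  refine ⟨m, n, ?_, by rw [hmn]; exact hg⟩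
  intro hn0
  rw [hn0] at hmn
  push_cast at hmn
  rw [zero_mul, add_zero] at hmn
  rcases hg with ⟨hg1, hg2⟩
  rw [← hmn] at hg1 hg2
  have : (0 : ℤ) < m := by exact_mod_cast hg1
  have : (m : ℝ) ≥ 1 := by exact_mod_cast this
  have := lt_of_lt_of_le hg2 (min_le_right ε 1)
  linarith

lemma approx_pos (α : ℝ) (hα : Irrational α) {ε : ℝ} (hε : 0 < ε) :
    ∃ (q : ℕ) (p : ℤ), 0 < q ∧ (q : ℝ) * α - p ∈ Set.Ioo (0 : ℝ) ε := by
  obtain ⟨m, n, hn0, hmem⟩ := aux_exists_small α hα hε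
  rcases hmem with ⟨hpos, hlt⟩
  have hltε : (m : ℝ) + n * α < ε := lt_of_lt_of_le hlt (min_le_left ε 1)
  have hlt1 : (m : ℝ) + n * α < 1 := lt_of_lt_of_le hlt (min_le_right ε 1)
  rcases lt_or_gt_of_ne hn0 with hneg | hposn
  · -- n < 0 : use the flipping trick
    set δ : ℝ := (m : ℝ) + n * α with hδdef
    have hδirr : Irrational δ := (hα.intCast_mul hn0).intCast_add m
    have hδ0 : 0 < δ := hpos
    set k : ℤ := ⌊1 / δ⌋ with hkdef
    have hk1 : 1 ≤ k := by
      rw [hkdef, Int.le_floor]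
      rw [le_div_iff₀ hδ0]
      push_cast
      linarith
    have hk0 : k ≠ 0 := by omega
    have hkδ_le : (k : ℝ) * δ ≤ 1 := by
      have := Int.floor_le (1 / δ)
      rw [← hkdef] at this
      calc (k : ℝ) * δ ≤ (1 / δ) * δ := by
            apply mul_le_mul_of_nonneg_right this hδ0.le
        _ = 1 := by field_simp
    have hkδ_ne : (k : ℝ) * δ ≠ 1 := (hδirr.intCast_mul hk0).ne_one
    have hkδ_lt : (k : ℝ) * δ < 1 := lt_of_le_of_ne hkδ_le hkδ_ne
    have hk1δ : 1 < ((k : ℝ) + 1) * δ := by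
      have := Int.lt_floor_add_one (1 / δ)
      rw [← hkdef] at this
      calc (1 : ℝ) = (1 / δ) * δ := by field_simp
        _ < ((k : ℝ) + 1) * δ := by
            apply mul_lt_mul_of_pos_right this hδ0
    have hηδ : 1 - (k : ℝ) * δ < δ := by nlinarith
    refine ⟨(k * (-n)).toNat, k * m - 1, ?_, ?_, ?_⟩
    · have : 1 ≤ k * (-n) := by nlinarith
      omega
    · have h1 : (0 : ℤ) ≤ k * (-n) := by nlinarith
      have hcast : ((k * (-n)).toNat : ℝ) = (k : ℝ) * (-(n : ℝ)) := by
        rw [← Int.cast_natCast (R := ℝ), Int.toNat_of_nonneg h1]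
        push_cast; ring
      rw [hcast]
      push_cast
      have : (k : ℝ) * (-(n : ℝ)) * α - ((k : ℝ) * m - 1) = 1 - k * δ := by
        rw [hδdef]; ring
      rw [this]
      linarith
    · have h1 : (0 : ℤ) ≤ k * (-n) := by nlinarith
      have hcast : ((k * (-n)).toNat : ℝ) = (k : ℝ) * (-(n : ℝ)) := by
        rw [← Int.cast_natCast (R := ℝ), Int.toNat_of_nonneg h1]
        push_cast; ring
      rw [hcast]
      push_cast
      have : (k : ℝ) * (-(n : ℝ)) * α - ((k : ℝ) * m - 1) = 1 - k * δ := by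
        rw [hδdef]; ring
      rw [this]
      linarith
  · -- n > 0 : direct
    refine ⟨n.toNat, -m, ?_, ?_, ?_⟩
    · omega
    · have hcast : (n.toNat : ℝ) = (n : ℝ) := by
        have h := Int.toNat_of_nonneg hposn.le
        exact_mod_cast congrArg (Int.cast : ℤ → ℝ) h
      rw [hcast]
      push_cast
      linarith
    · have hcast : (n.toNat : ℝ) = (n : ℝ) := by
        have h := Int.toNat_of_nonneg hposn.le
        exact_mod_cast congrArg (Int.cast : ℤ → ℝ) h
      rw [hcast]
      push_cast
      linarith

lemma approx_neg (α : ℝ) (hα : Irrational α) {ε : ℝ} (hε : 0 < ε) :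
    ∃ (q : ℕ) (p : ℤ), 0 < q ∧ (p : ℝ) - q * α ∈ Set.Ioo (0 : ℝ) ε := by
  obtain ⟨q, p, hq, h1, h2⟩ := approx_pos (-α) hα.neg hε
  exact ⟨q, -p, hq, by push_cast; constructor <;> [linarith; linarith]⟩

open CircleDeg1Lift in
lemma core_strict (f g : CircleDeg1Lift) (hfc : Continuous ⇑f) (hgc : Continuous ⇑g)
    (hlt : ∀ x, f x < g x)
    (hirr : Irrational f.translationNumber ∨ Irrational g.translationNumber) :
    f.translationNumber < g.translationNumber := by
  -- uniform gap ε
  obtain ⟨x₀, hx₀mem, hx₀⟩ :=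
    isCompact_Icc.exists_isMinOn (Set.nonempty_Icc.2 (zero_le_one : (0:ℝ) ≤ 1))
      ((hgc.sub hfc).continuousOn : ContinuousOn (fun x => g x - f x) (Set.Icc 0 1))
  set ε : ℝ := g x₀ - f x₀ with hεdef
  have hεpos : 0 < ε := sub_pos.2 (hlt x₀)
  have key : ∀ x, f x + ε ≤ g x := by
    intro x
    have hrw : g x - f x = g (Int.fract x) - f (Int.fract x) := by
      have hx : x = Int.fract x + ⌊x⌋ := (Int.fract_add_floor x).symm
      conv_lhs => rw [hx]
      rw [CircleDeg1Lift.map_add_int, CircleDeg1Lift.map_add_int]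
      ring
    have hmem : Int.fract x ∈ Set.Icc (0:ℝ) 1 :=
      ⟨Int.fract_nonneg x, (Int.fract_lt_one x).le⟩
    have := (isMinOn_iff.1 hx₀) _ hmem
    have : ε ≤ g x - f x := by rw [hrw]; exact this
    linarith
  have hle : f ≤ g := fun x => (hlt x).le
  have hqle : ∀ (q : ℕ) (x : ℝ), (f ^ (q + 1)) x + ε ≤ (g ^ (q + 1)) x := by
    intro q x
    have h1 : (f ^ (q + 1)) x = f ((f ^ q) x) := by
      rw [pow_succ']; rfl
    have h2 : (g ^ (q + 1)) x = g ((g ^ q) x) := by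
      rw [pow_succ']; rfl
    have h3 : (f ^ q) x ≤ (g ^ q) x := CircleDeg1Lift.pow_mono hle q x
    calc (f ^ (q + 1)) x + ε = f ((f ^ q) x) + ε := by rw [h1]
      _ ≤ g ((f ^ q) x) := key _
      _ ≤ g ((g ^ q) x) := g.mono h3
      _ = (g ^ (q + 1)) x := h2.symm
  rcases hirr with hfi | hgi
  · -- irrational τ f : bound g from below
    obtain ⟨q, p, hq, h1, h2⟩ := approx_pos f.translationNumber hfi hεpos
    obtain ⟨q', rfl⟩ := Nat.exists_eq_succ_of_ne_zero hq.ne'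
    set Q : ℕ := q' + 1
    have hτfq : (f ^ Q).translationNumber = (Q : ℝ) * f.translationNumber :=
      translationNumber_pow f Q
    have hplt : (p : ℝ) < (f ^ Q).translationNumber := by rw [hτfq]; linarith
    have hmap : ∀ x, x + (p : ℝ) < (f ^ Q) x := fun x =>
      (f ^ Q).lt_map_of_int_lt_translationNumber hplt x
    have hgb : ∀ x, x + ((p : ℝ) + ε) ≤ (g ^ Q) x := by
      intro x
      have := hqle q' x
      have := hmap x
      linarith
    have hτg : (p : ℝ) + ε ≤ (g ^ Q).translationNumber :=
      (g ^ Q).le_translationNumber_of_add_le hgb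
    rw [translationNumber_pow] at hτg
    have hQpos : (0 : ℝ) < (Q : ℝ) := by positivity
    have : (Q : ℝ) * f.translationNumber < (Q : ℝ) * g.translationNumber := by linarith
    exact lt_of_mul_lt_mul_left this hQpos.le
  · -- irrational τ g : bound f from above
    obtain ⟨q, p, hq, h1, h2⟩ := approx_neg g.translationNumber hgi hεpos
    obtain ⟨q', rfl⟩ := Nat.exists_eq_succ_of_ne_zero hq.ne'
    set Q : ℕ := q' + 1
    have hτgq : (g ^ Q).translationNumber = (Q : ℝ) * g.translationNumber :=
      translationNumber_pow g Q
    have hplt : (g ^ Q).translationNumber < (p : ℝ) := by rw [hτgq]; linarith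
    have hmap : ∀ x, (g ^ Q) x < x + (p : ℝ) := fun x =>
      (g ^ Q).map_lt_of_translationNumber_lt_int hplt x
    have hfb : ∀ x, (f ^ Q) x ≤ x + ((p : ℝ) - ε) := by
      intro x
      have := hqle q' x
      have := hmap x
      linarith
    have hτf : (f ^ Q).translationNumber ≤ (p : ℝ) - ε :=
      (f ^ Q).translationNumber_le_of_le_add hfb
    rw [translationNumber_pow] at hτf
    have hQpos : (0 : ℝ) < (Q : ℝ) := by positivity
    have : (Q : ℝ) * f.translationNumber < (Q : ℝ) * g.translationNumber := by linarith
    exact lt_of_mul_lt_mul_left this hQpos.le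

lemma exists_lift (φ : ℝ → ℝ) (K : ℝ) (hK : 0 < K)
    (hLip : ∀ x y : ℝ, |φ x - φ y| ≤ K * |x - y|)
    (hper : ∀ x : ℝ, φ (x + 1) = φ x)
    (t a : ℝ) (ha : a ∈ Set.Ioo (-(1 / K)) (1 / K)) :
    ∃ F : CircleDeg1Lift, ⇑F = fun x => x + t + a * φ x := by
  have haK : |a| * K ≤ 1 := by
    have h1 : |a| < 1 / K := abs_lt.2 ⟨ha.1, ha.2⟩
    have := mul_le_mul_of_nonneg_right h1.le hK.le
    rwa [one_div, inv_mul_cancel₀ hK.ne'] at this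
  refine ⟨⟨⟨fun x => x + t + a * φ x, ?_⟩, ?_⟩, rfl⟩
  · intro x y hxy
    simp only
    have hcalc : a * (φ x - φ y) ≤ y - x := by
      calc a * (φ x - φ y) ≤ |a * (φ x - φ y)| := le_abs_self _
        _ = |a| * |φ x - φ y| := abs_mul _ _
        _ ≤ |a| * (K * |x - y|) :=
            mul_le_mul_of_nonneg_left (hLip x y) (abs_nonneg a)
        _ = (|a| * K) * |x - y| := by ring
        _ ≤ 1 * |x - y| := mul_le_mul_of_nonneg_right haK (abs_nonneg _)
        _ = y - x := by
            rw [one_mul, abs_sub_comm, abs_of_nonneg (sub_nonneg.2 hxy)]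
    linarith
  · intro x
    simp only
    rw [hper]
    ring

theorem stmt_4 (φ : ℝ → ℝ) (K : ℝ) (hK : 0 < K)
    (hLip : ∀ x y : ℝ, |φ x - φ y| ≤ K * |x - y|)
    (hper : ∀ x : ℝ, φ (x + 1) = φ x)
    (τ : ℝ → ℝ → ℝ)
    (hτ : ∀ t : ℝ, ∀ a ∈ Set.Ioo (-(1 / K)) (1 / K),
      IsTransNum (fun x => x + t + a * φ x) (τ t a))
    (t₀ t a₀ a : ℝ)
    (ha₀ : a₀ ∈ Set.Ioo (-(1 / K)) (1 / K)) (ha : a ∈ Set.Ioo (-(1 / K)) (1 / K)) :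
    (((a₀ < a ∧ (t - t₀) / (a - a₀) < -sSup (Set.range φ)) ∨
      (a < a₀ ∧ (t - t₀) / (a - a₀) > -sInf (Set.range φ))) →
        τ t a ≤ τ t₀ a₀ ∧ (Irrational (τ t₀ a₀) → τ t a < τ t₀ a₀)) ∧
    (((a₀ < a ∧ (t - t₀) / (a - a₀) > -sInf (Set.range φ)) ∨
      (a < a₀ ∧ (t - t₀) / (a - a₀) < -sSup (Set.range φ))) →
        τ t a ≥ τ t₀ a₀ ∧ (Irrational (τ t₀ a₀) → τ t a > τ t₀ a₀)) := by
  -- continuity of φ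
  have hφc : Continuous φ := by
    have : LipschitzWith ⟨K, hK.le⟩ φ :=
      LipschitzWith.of_dist_le_mul fun x y => by
        rw [Real.dist_eq, Real.dist_eq]; exact hLip x y
    exact this.continuous
  have hp : Function.Periodic φ 1 := hper
  -- range of φ is the image of a compact set
  have himg : Set.range φ = φ '' Set.Icc 0 1 := by
    apply Set.Subset.antisymm
    · rintro _ ⟨x, rfl⟩
      refine ⟨Int.fract x, ⟨Int.fract_nonneg x, (Int.fract_lt_one x).le⟩, ?_⟩
      have : Int.fract x = x - (⌊x⌋ : ℝ) * 1 := by rw [mul_one]; exact (Int.self_sub_floor x).symm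
      rw [this, hp.sub_int_mul_eq]
    · exact Set.image_subset_range φ _
  have hbdd : BddAbove (Set.range φ) ∧ BddBelow (Set.range φ) := by
    rw [himg]
    exact ⟨(isCompact_Icc.image hφc).bddAbove, (isCompact_Icc.image hφc).bddBelow⟩
  have hsup : ∀ x, φ x ≤ sSup (Set.range φ) := fun x => le_csSup hbdd.1 ⟨x, rfl⟩
  have hinf : ∀ x, sInf (Set.range φ) ≤ φ x := fun x => csInf_le hbdd.2 ⟨x, rfl⟩
  -- the lifts
  obtain ⟨F, hF⟩ := exists_lift φ K hK hLip hper t a ha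
  obtain ⟨F₀, hF₀⟩ := exists_lift φ K hK hLip hper t₀ a₀ ha₀
  have hFc : Continuous ⇑F := by
    rw [hF]
    exact (continuous_id.add continuous_const).add (continuous_const.mul hφc)
  have hF₀c : Continuous ⇑F₀ := by
    rw [hF₀]
    exact (continuous_id.add continuous_const).add (continuous_const.mul hφc)
  have hτF : F.translationNumber = τ t a := by
    apply F.translationNumber_eq_of_tendsto₀
    have := hτ t a ha 0
    rw [← hF] at this
    simpa [sub_zero] using this
  have hτF₀ : F₀.translationNumber = τ t₀ a₀ := by
    apply F₀.translationNumber_eq_of_tendsto₀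
    have := hτ t₀ a₀ ha₀ 0
    rw [← hF₀] at this
    simpa [sub_zero] using this
  constructor
  · -- first part: F < F₀ pointwise
    intro hcase
    have hpt : ∀ x, F x < F₀ x := by
      intro x
      rw [hF, hF₀]
      simp only
      rcases hcase with ⟨hlt, hdiv⟩ | ⟨hlt, hdiv⟩
      · have hpos : (0:ℝ) < a - a₀ := sub_pos.2 hlt
        have h1 : t - t₀ < -sSup (Set.range φ) * (a - a₀) := (div_lt_iff₀ hpos).1 hdiv
        have h2 := mul_le_mul_of_nonneg_left (hsup x) hpos.le
        nlinarith
      · have hneg : a - a₀ < 0 := sub_neg.2 hlt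
        have h1 : t - t₀ < -sInf (Set.range φ) * (a - a₀) := (lt_div_iff_of_neg hneg).1 hdiv
        have h2 := mul_le_mul_of_nonpos_left (hinf x) hneg.le
        nlinarith
    constructor
    · have : F ≤ F₀ := fun x => (hpt x).le
      have := CircleDeg1Lift.translationNumber_mono this
      rwa [hτF, hτF₀] at this
    · intro hirr
      have := core_strict F F₀ hFc hF₀c hpt (Or.inr (by rwa [hτF₀]))
      rwa [hτF, hτF₀] at this
  · -- second part: F₀ < F pointwise
    intro hcase
    have hpt : ∀ x, F₀ x < F x := by
      intro x
      rw [hF, hF₀]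
      simp only
      rcases hcase with ⟨hlt, hdiv⟩ | ⟨hlt, hdiv⟩
      · have hpos : (0:ℝ) < a - a₀ := sub_pos.2 hlt
        have h1 : -sInf (Set.range φ) * (a - a₀) < t - t₀ := (lt_div_iff₀ hpos).1 hdiv
        have h2 := mul_le_mul_of_nonneg_left (hinf x) hpos.le
        nlinarith
      · have hneg : a - a₀ < 0 := sub_neg.2 hlt
        have h1 : -sSup (Set.range φ) * (a - a₀) < t - t₀ := (div_lt_iff_of_neg hneg).1 hdiv
        have h2 := mul_le_mul_of_nonpos_left (hsup x) hneg.le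
        nlinarith
    constructor
    · have : F₀ ≤ F := fun x => (hpt x).le
      have := CircleDeg1Lift.translationNumber_mono this
      rwa [hτF, hτF₀] at this
    · intro hirr
      have := core_strict F₀ F hF₀c hFc hpt (Or.inl (by rwa [hτF₀]))
      rwa [hτF, hτF₀] at this
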